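/- Let A be an n×n Hermitian matrix and x a unit vector that is a local maximizer of the Rayleigh quotient x ↦ x^H A x over the unit sphere of ℂ^n. Then x is an eigenvector of A corresponding to its largest eigenvalue. -/

import Mathlib

open Matrix BigOperators

set_option maxHeartbeats 1000000

private lemma stmt18_aux1 {n : ℕ} (A : Matrix (Fin n) (Fin n) ℂ) (hA : A.IsHermitian)
    (x : Fin n → ℂ) (hx : star x ⬝ᵥ x = 1)
    (hloc : ∃ ε > 0, ∀ y : Fin n → ℂ, star y ⬝ᵥ y = 1 →
        Real.sqrt ((star (y - x) ⬝ᵥ (y - x)).re) ≤ ε →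
        (star y ⬝ᵥ A.mulVec y).re ≤ (star x ⬝ᵥ A.mulVec x).re) :
    A.mulVec x = (((star x ⬝ᵥ A.mulVec x).re : ℝ) : ℂ) • x := by
  set T : EuclideanSpace ℂ (Fin n) →L[ℂ] EuclideanSpace ℂ (Fin n) :=
    Matrix.toEuclideanCLM (𝕜 := ℂ) A with hT_def
  have hT : IsSelfAdjoint T := by
    have hstar : star A = A := hA
    rw [hT_def, _root_.IsSelfAdjoint, ← map_star, hstar]
  set x' : EuclideanSpace ℂ (Fin n) := (WithLp.equiv 2 _).symm x with hx'_def
  have hinner : ∀ v w : Fin n → ℂ,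
      (inner ℂ ((WithLp.equiv 2 (Fin n → ℂ)).symm v) ((WithLp.equiv 2 (Fin n → ℂ)).symm w) : ℂ)
        = star v ⬝ᵥ w := fun v w => by simp [PiLp.inner_apply, dotProduct, mul_comm]
  -- norms of general vectors
  have hnorm : ∀ v : Fin n → ℂ,
      ‖(WithLp.equiv 2 (Fin n → ℂ)).symm v‖ ^ 2 = (star v ⬝ᵥ v).re := by
    intro v
    have h1 : (inner ℂ ((WithLp.equiv 2 (Fin n → ℂ)).symm v)
        ((WithLp.equiv 2 (Fin n → ℂ)).symm v) : ℂ)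
        = ((‖(WithLp.equiv 2 (Fin n → ℂ)).symm v‖ : ℂ))^2 := inner_self_eq_norm_sq_to_K _
    rw [hinner] at h1
    have h2 := congrArg Complex.re h1
    simp only [pow_two, Complex.mul_re, Complex.ofReal_re, Complex.ofReal_im] at h2
    rw [pow_two]
    rw [h2]
    ring
  have hnx : ‖x'‖ = 1 := by
    have h2 := hnorm x
    rw [hx] at h2
    simp only [Complex.one_re] at h2
    nlinarith [norm_nonneg x']
  -- the re-apply-inner-self in matrix terms
  have hre : ∀ v : Fin n → ℂ,
      T.reApplyInnerSelf ((WithLp.equiv 2 (Fin n → ℂ)).symm v) = (star v ⬝ᵥ A.mulVec v).re := by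
    intro v
    have hTv : T ((WithLp.equiv 2 (Fin n → ℂ)).symm v)
        = (WithLp.equiv 2 (Fin n → ℂ)).symm (A.mulVec v) := rfl
    rw [ContinuousLinearMap.reApplyInnerSelf, hTv, hinner]
    rw [star_dotProduct]
    simp
  have hextr : IsLocalExtrOn T.reApplyInnerSelf (Metric.sphere (0 : EuclideanSpace ℂ (Fin n)) ‖x'‖) x' := by
    refine Or.inr ?_
    obtain ⟨ε, hε, hl⟩ := hloc
    have hball : Metric.closedBall x' ε ∈ nhdsWithin x' (Metric.sphere (0 : EuclideanSpace ℂ (Fin n)) ‖x'‖) :=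
      nhdsWithin_le_nhds (Metric.closedBall_mem_nhds x' hε)
    filter_upwards [hball, self_mem_nhdsWithin] with y hy hys
    set y0 : Fin n → ℂ := WithLp.equiv 2 (Fin n → ℂ) y with hy0
    have hyeq : (WithLp.equiv 2 (Fin n → ℂ)).symm y0 = y := rfl
    have hny : ‖y‖ = 1 := by
      rw [Metric.mem_sphere, dist_zero_right] at hys
      rw [hys, hnx]
    have hy1 : star y0 ⬝ᵥ y0 = 1 := by
      have h1 : (inner ℂ y y : ℂ) = ((‖y‖ : ℂ))^2 := inner_self_eq_norm_sq_to_K _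
      rw [← hyeq, hinner] at h1
      have hny' : ‖(WithLp.equiv 2 (Fin n → ℂ)).symm y0‖ = 1 := hyeq ▸ hny
      rw [h1, hny']
      norm_num
    have hdist : Real.sqrt ((star (y0 - x) ⬝ᵥ (y0 - x)).re) ≤ ε := by
      have hsub : (WithLp.equiv 2 (Fin n → ℂ)).symm (y0 - x) = y - x' := rfl
      have h2 := hnorm (y0 - x)
      rw [hsub] at h2
      rw [← h2, Real.sqrt_sq (norm_nonneg _)]
      rw [Metric.mem_closedBall, dist_eq_norm] at hy
      exact hy
    have := hl y0 hy1 hdist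
    rw [← hyeq] at *
    rw [hre, hre]
    exact this
  have heig := hT.eq_smul_self_of_isLocalExtrOn hextr
  have hray : T.rayleighQuotient x' = (star x ⬝ᵥ A.mulVec x).re := by
    rw [ContinuousLinearMap.rayleighQuotient, hnx]
    rw [hx'_def, hre]
    norm_num
  rw [hray] at heig
  have : WithLp.equiv 2 (Fin n → ℂ) (T x') = WithLp.equiv 2 (Fin n → ℂ)
      ((((star x ⬝ᵥ A.mulVec x).re : ℝ) : ℂ) • x') := congrArg _ heig
  exact this

set_option maxHeartbeats 1000000 in
private lemma stmt18_aux2 {n : ℕ} (A : Matrix (Fin n) (Fin n) ℂ) (hA : A.IsHermitian)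
    (x : Fin n → ℂ) (hx : star x ⬝ᵥ x = 1) (lam : ℝ)
    (hlam : lam = (star x ⬝ᵥ A.mulVec x).re)
    (hAx : A.mulVec x = (lam : ℂ) • x)
    (ε : ℝ) (hε : ε > 0)
    (hl : ∀ y : Fin n → ℂ, star y ⬝ᵥ y = 1 →
        Real.sqrt ((star (y - x) ⬝ᵥ (y - x)).re) ≤ ε →
        (star y ⬝ᵥ A.mulVec y).re ≤ (star x ⬝ᵥ A.mulVec x).re)
    (μ : ℝ) (y : Fin n → ℂ) (hy0 : y ≠ 0) (hy : A.mulVec y = (μ : ℂ) • y) :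
    μ ≤ lam := by
  by_contra hcon
  push_neg at hcon
  -- orthogonality of x and y
  have horth : star x ⬝ᵥ y = 0 := by
    have h1 : star x ⬝ᵥ A.mulVec y = (μ : ℂ) * (star x ⬝ᵥ y) := by
      rw [hy, dotProduct_smul, smul_eq_mul]
    have h2 : star x ⬝ᵥ A.mulVec y = (lam : ℂ) * (star x ⬝ᵥ y) := by
      rw [dotProduct_mulVec]
      have h3 : star x ᵥ* A = (lam : ℂ) • star x := by
        calc star x ᵥ* A = star x ᵥ* Aᴴ := by rw [hA.eq]
        _ = star (A.mulVec x) := (star_mulVec A x).symm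
        _ = star ((lam : ℂ) • x) := by rw [hAx]
        _ = (lam : ℂ) • star x := by
            rw [star_smul]
            congr 1
            simp [Complex.star_def, Complex.conj_ofReal]
      rw [h3, smul_dotProduct, smul_eq_mul]
    by_contra hdne
    have h4 : (μ : ℂ) * (star x ⬝ᵥ y) = (lam : ℂ) * (star x ⬝ᵥ y) := h1.symm.trans h2
    have h5 : (μ : ℂ) = (lam : ℂ) := mul_right_cancel₀ hdne h4
    have : μ = lam := by exact_mod_cast h5
    exact absurd this (ne_of_gt hcon)
  have horth' : star y ⬝ᵥ x = 0 := by
    rw [star_dotProduct, horth, star_zero]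
  -- normalize y
  set S : ℝ := ∑ i, Complex.normSq (y i) with hS_def
  have hSy : star y ⬝ᵥ y = (S : ℂ) := by
    rw [hS_def]
    push_cast
    simp [dotProduct, Complex.normSq_eq_conj_mul_self]
  have hS_pos : 0 < S := by
    rcases Function.ne_iff.mp hy0 with ⟨i, hi⟩
    have : 0 < Complex.normSq (y i) := Complex.normSq_pos.mpr hi
    exact Finset.sum_pos' (fun j _ => Complex.normSq_nonneg _) ⟨i, Finset.mem_univ i, this⟩
  set c : ℝ := Real.sqrt S with hc_def
  have hc_pos : 0 < c := Real.sqrt_pos.mpr hS_pos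
  set u : Fin n → ℂ := ((c⁻¹ : ℝ) : ℂ) • y with hu_def
  have hstar_u : star u = ((c⁻¹ : ℝ) : ℂ) • star y := by
    rw [hu_def, star_smul]
    congr 1
    simp [Complex.star_def, Complex.conj_ofReal]
  have huu : star u ⬝ᵥ u = 1 := by
    rw [hu_def, hstar_u, smul_dotProduct, dotProduct_smul, hSy, smul_eq_mul, smul_eq_mul]
    have : c^2 = S := Real.sq_sqrt hS_pos.le
    push_cast [← this]
    have hc0 : ((c:ℝ):ℂ) ≠ 0 := Complex.ofReal_ne_zero.mpr hc_pos.ne'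
    field_simp
  have hxu : star x ⬝ᵥ u = 0 := by
    rw [hu_def, dotProduct_smul, horth, smul_zero]
  have hux : star u ⬝ᵥ x = 0 := by
    rw [hstar_u, smul_dotProduct, horth', smul_zero]
  have hAu : A.mulVec u = (μ : ℂ) • u := by
    rw [hu_def, mulVec_smul, hy, smul_comm]
  -- perturbation
  set s : ℝ := min (ε/2) 1 with hs_def
  have hs_pos : 0 < s := lt_min (by linarith) one_pos
  have hs1 : s ≤ 1 := min_le_right _ _
  have hsε : 2 * s ≤ ε := by
    have := min_le_left (ε/2) 1
    linarith
  set r : ℝ := Real.sqrt (1 + s^2) with hr_def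
  have hr2 : r^2 = 1 + s^2 := Real.sq_sqrt (by positivity)
  have hr1 : 1 ≤ r := by
    nlinarith [Real.sqrt_nonneg (1 + s^2), hr2, sq_nonneg s]
  have hr_pos : 0 < r := by linarith
  have hrle : r ≤ 1 + s^2 := by
    rw [hr_def]
    calc Real.sqrt (1+s^2) ≤ Real.sqrt ((1+s^2)^2) :=
          Real.sqrt_le_sqrt (by nlinarith [sq_nonneg s])
    _ = 1 + s^2 := Real.sqrt_sq (by positivity)
  set P : Fin n → ℂ := x + ((s:ℝ):ℂ) • u with hP_def
  have hstarP : star P = star x + ((s:ℝ):ℂ) • star u := by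
    rw [hP_def, star_add, star_smul]
    congr 2
    simp [Complex.star_def, Complex.conj_ofReal]
  have hPP : star P ⬝ᵥ P = ((1 + s^2 : ℝ) : ℂ) := by
    rw [hstarP, hP_def]
    simp only [add_dotProduct, dotProduct_add, smul_dotProduct, dotProduct_smul, hx, huu, hxu,
      hux, smul_eq_mul]
    push_cast
    ring
  have hAP : A.mulVec P = (lam:ℂ) • x + ((s:ℝ):ℂ) • ((μ:ℂ) • u) := by
    rw [hP_def, mulVec_add, mulVec_smul, hAx, hAu]
  have hPAP : star P ⬝ᵥ A.mulVec P = ((lam + μ * s^2 : ℝ) : ℂ) := by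
    rw [hstarP, hAP]
    simp only [add_dotProduct, dotProduct_add, smul_dotProduct, dotProduct_smul, hx, huu, hxu,
      hux, smul_eq_mul]
    push_cast
    ring
  have hxP : star x ⬝ᵥ P = 1 := by
    rw [hP_def]
    simp only [dotProduct_add, dotProduct_smul, hx, hxu, smul_eq_mul]
    ring
  have hPx : star P ⬝ᵥ x = 1 := by
    rw [hstarP]
    simp only [add_dotProduct, smul_dotProduct, hx, hux, smul_eq_mul]
    ring
  set z : Fin n → ℂ := ((r⁻¹:ℝ):ℂ) • P with hz_def
  have hstarz : star z = ((r⁻¹:ℝ):ℂ) • star P := by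
    rw [hz_def, star_smul]
    congr 1
    simp [Complex.star_def, Complex.conj_ofReal]
  have hrinv2 : (r⁻¹)^2 * (1+s^2) = 1 := by
    field_simp
    exact hr2.symm
  have hzz : star z ⬝ᵥ z = 1 := by
    rw [hstarz, hz_def, smul_dotProduct, dotProduct_smul, hPP, smul_eq_mul, smul_eq_mul]
    norm_cast
    push_cast
    nlinarith [hrinv2]
  have hAz : A.mulVec z = ((r⁻¹:ℝ):ℂ) • A.mulVec P := by rw [hz_def, mulVec_smul]
  have hzAz : star z ⬝ᵥ A.mulVec z = (((r⁻¹)^2 * (lam + μ*s^2) : ℝ) : ℂ) := by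
    rw [hstarz, hAz, smul_dotProduct, dotProduct_smul, hPAP, smul_eq_mul, smul_eq_mul]
    push_cast
    ring
  have hxz : star x ⬝ᵥ z = ((r⁻¹:ℝ):ℂ) := by
    rw [hz_def, dotProduct_smul, hxP, smul_eq_mul, mul_one]
  have hzx : star z ⬝ᵥ x = ((r⁻¹:ℝ):ℂ) := by
    rw [hstarz, smul_dotProduct, hPx, smul_eq_mul, mul_one]
  have hdiff : star (z - x) ⬝ᵥ (z - x) = ((2 - 2*r⁻¹ : ℝ) : ℂ) := by
    rw [star_sub]
    simp only [sub_dotProduct, dotProduct_sub, hzz, hzx, hxz, hx]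
    push_cast
    ring
  have hdist : Real.sqrt ((star (z - x) ⬝ᵥ (z - x)).re) ≤ ε := by
    rw [hdiff, Complex.ofReal_re]
    have h1 : r * r⁻¹ = 1 := mul_inv_cancel₀ hr_pos.ne'
    have hb : 2 - 2*r⁻¹ ≤ (2*s)^2 := by
      nlinarith [hr_pos, hrle, hs1, hs_pos, sq_nonneg s]
    calc Real.sqrt (2 - 2*r⁻¹) ≤ Real.sqrt ((2*s)^2) := Real.sqrt_le_sqrt hb
    _ = 2*s := Real.sqrt_sq (by linarith)
    _ ≤ ε := hsε
  have hfin := hl z hzz hdist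
  rw [hzAz, Complex.ofReal_re, ← hlam] at hfin
  have hkey : (r⁻¹^2 * (lam + μ*s^2)) * (1+s^2) ≤ lam * (1+s^2) :=
    mul_le_mul_of_nonneg_right hfin (by positivity)
  have h2 : lam + μ*s^2 ≤ lam*(1+s^2) := by
    rw [show r⁻¹^2 * (lam + μ*s^2) * (1+s^2) = (r⁻¹^2*(1+s^2))*(lam+μ*s^2) by ring, hrinv2,
      one_mul] at hkey
    exact hkey
  nlinarith [h2, mul_pos (sub_pos.mpr hcon) (mul_pos hs_pos hs_pos)]

theorem stmt18 {n : ℕ} (A : Matrix (Fin n) (Fin n) ℂ) (hA : A.IsHermitian)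
    (x : Fin n → ℂ) (hx : star x ⬝ᵥ x = 1)
    (hloc : ∃ ε > 0, ∀ y : Fin n → ℂ, star y ⬝ᵥ y = 1 →
        Real.sqrt ((star (y - x) ⬝ᵥ (y - x)).re) ≤ ε →
        (star y ⬝ᵥ A.mulVec y).re ≤ (star x ⬝ᵥ A.mulVec x).re) :
    ∃ lam : ℝ, A.mulVec x = (lam : ℂ) • x ∧
      ∀ (μ : ℝ) (y : Fin n → ℂ), y ≠ 0 → A.mulVec y = (μ : ℂ) • y → μ ≤ lam := by
  have hAx := stmt18_aux1 A hA x hx hloc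
  obtain ⟨ε, hε, hl⟩ := hloc
  exact ⟨(star x ⬝ᵥ A.mulVec x).re, hAx, fun μ y hy0 hy =>
    stmt18_aux2 A hA x hx _ rfl hAx ε hε hl μ y hy0 hy⟩
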